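/- Every holomorphic automorphism of X = Δ × ℂ (Δ the open unit disc) has the form (z, w) ↦ (φ(z), f(z)·w + g(z)) where φ is a holomorphic automorphism of Δ, f: Δ → ℂ* is holomorphic and nowhere zero, and g: Δ → ℂ is holomorphic. -/

import Mathlib

open Set Metric Polynomial Bornology Filter Topology

/-- An entire function with polynomial growth is a polynomial. -/
lemma entire_poly_growth : ∀ (n : ℕ) (h : ℂ → ℂ), Differentiable ℂ h →
    (∃ C : ℝ, ∀ w : ℂ, ‖h w‖ ≤ C * (1 + ‖w‖) ^ n) →
    ∃ p : Polynomial ℂ, ∀ w : ℂ, h w = p.eval w := by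
  intro n
  induction n with
  | zero =>
    intro h hd ⟨C, hC⟩
    refine ⟨Polynomial.C (h 0), fun w => ?_⟩
    rw [eval_C]
    have hb : IsBounded (range h) := by
      apply (isBounded_closedBall (x := (0:ℂ)) (r := C)).subset
      rintro - ⟨w, rfl⟩
      rw [mem_closedBall_zero_iff]
      simpa using hC w
    exact hd.apply_eq_apply_of_bounded hb w 0
  | succ n ih =>
    intro h hd ⟨C, hC⟩
    have hC0 : 0 ≤ C := le_trans (norm_nonneg (h 0)) (by simpa using hC 0)
    set q : ℂ → ℂ := dslope h 0 with hq
    have hqd : Differentiable ℂ q := by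
      rw [← differentiableOn_univ]
      exact (Complex.differentiableOn_dslope Filter.univ_mem).2 hd.differentiableOn
    have hkey : ∀ w : ℂ, h w = h 0 + w * q w := by
      intro w
      have h1 := sub_smul_dslope h 0 w
      simp only [sub_zero, smul_eq_mul] at h1
      rw [hq]; linear_combination -h1
    obtain ⟨D, hD⟩ := (isCompact_closedBall (0:ℂ) 1).exists_bound_of_continuousOn
      hqd.continuous.continuousOn
    have hD0 : 0 ≤ D := le_trans (norm_nonneg (q 0)) (hD 0 (by simp))
    have hqb : ∀ w : ℂ, ‖q w‖ ≤ (D + 4 * C) * (1 + ‖w‖) ^ n := by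
      intro w
      have hwn : (0:ℝ) ≤ ‖w‖ := norm_nonneg w
      have hpn : (0:ℝ) ≤ (1 + ‖w‖) ^ n := by positivity
      have hpow1 : (1:ℝ) ≤ (1 + ‖w‖) ^ n := one_le_pow₀ (by linarith)
      rcases le_or_gt ‖w‖ 1 with hw | hw
      · calc ‖q w‖ ≤ D := hD w (by simpa [Complex.dist_eq, mem_closedBall, dist_zero_right] using hw)
          _ = D * 1 := by ring
          _ ≤ (D + 4 * C) * (1 + ‖w‖) ^ n :=
              mul_le_mul (by linarith) hpow1 zero_le_one (by positivity)
      · have hwpos : (0:ℝ) < ‖w‖ := by linarith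
        have hqw : w * q w = h w - h 0 := by linear_combination -(hkey w)
        have e0 : ‖w‖ * ‖q w‖ = ‖h w - h 0‖ := by rw [← norm_mul, hqw]
        have e1 : ‖h w - h 0‖ ≤ 2 * C * (1 + ‖w‖) ^ (n + 1) := by
          have := hC w
          have h0b : ‖h 0‖ ≤ C * (1 + ‖w‖) ^ (n + 1) := by
            have := hC 0
            have : ‖h 0‖ ≤ C := by simpa using this
            have hp1 : (1:ℝ) ≤ (1 + ‖w‖) ^ (n+1) := one_le_pow₀ (by linarith)
            nlinarith
          calc ‖h w - h 0‖ ≤ ‖h w‖ + ‖h 0‖ := norm_sub_le _ _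
            _ ≤ 2 * C * (1 + ‖w‖) ^ (n + 1) := by linarith
        have e2 : (1 + ‖w‖) ^ (n + 1) ≤ 2 * ‖w‖ * (1 + ‖w‖) ^ n := by
          rw [pow_succ]
          nlinarith
        have e3 : ‖w‖ * ‖q w‖ ≤ ‖w‖ * (4 * C * (1 + ‖w‖) ^ n) := by
          rw [e0]; nlinarith
        have e4 : ‖q w‖ ≤ 4 * C * (1 + ‖w‖) ^ n := le_of_mul_le_mul_left e3 hwpos
        nlinarith
    obtain ⟨p, hp⟩ := ih q hqd ⟨D + 4 * C, hqb⟩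
    refine ⟨Polynomial.C (h 0) + Polynomial.X * p, fun w => ?_⟩
    simp [hkey w, hp w]

lemma entire_left_inverse_growth (h k : ℂ → ℂ) (hh : Differentiable ℂ h)
    (hk : Differentiable ℂ k) (hkh : ∀ w, k (h w) = w) :
    ∃ (n : ℕ) (C : ℝ), ∀ w : ℂ, ‖h w‖ ≤ C * (1 + ‖w‖) ^ n := by
  -- properness
  have prop : ∀ M : ℝ, ∃ R : ℝ, 0 < R ∧ ∀ w : ℂ, R ≤ ‖w‖ → M ≤ ‖h w‖ := by
    intro M
    obtain ⟨R', hR'⟩ := ((isCompact_closedBall (0:ℂ) M).image hk.continuous).isBounded.subset_closedBall 0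
    refine ⟨max R' 0 + 1, by positivity, fun w hw => ?_⟩
    by_contra hlt
    push_neg at hlt
    have : w ∈ closedBall (0:ℂ) R' := by
      have : w ∈ k '' closedBall 0 M :=
        ⟨h w, by simpa [mem_closedBall_zero_iff] using hlt.le, hkh w⟩
      exact hR' this
    rw [mem_closedBall_zero_iff] at this
    have : max R' 0 + 1 ≤ R' := le_trans hw this
    have : R' ≤ max R' 0 := le_max_left _ _
    linarith
  obtain ⟨R₁, hR₁pos, hR₁⟩ := prop 1
  set H : ℂ → ℂ := Function.update (fun z => (h z⁻¹)⁻¹) 0 0 with hH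
  have hball : ∀ z : ℂ, z ≠ 0 → ‖z‖ < R₁⁻¹ → h z⁻¹ ≠ 0 ∧ H z = (h z⁻¹)⁻¹ := by
    intro z hz0 hzlt
    have hzpos : 0 < ‖z‖ := norm_pos_iff.2 hz0
    have hinv : R₁ ≤ ‖z⁻¹‖ := by
      rw [norm_inv]
      rw [le_inv_comm₀ hR₁pos hzpos]
      exact hzlt.le
    have h1 : (1:ℝ) ≤ ‖h z⁻¹‖ := hR₁ _ hinv
    exact ⟨fun h0 => by rw [h0] at h1; simp at h1; linarith, Function.update_of_ne hz0 _ _⟩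
  have hdiff : ∀ z : ℂ, z ≠ 0 → ‖z‖ < R₁⁻¹ → DifferentiableAt ℂ H z := by
    intro z hz0 hzlt
    have hne := (hball z hz0 hzlt).1
    have hbase : DifferentiableAt ℂ (fun z : ℂ => (h z⁻¹)⁻¹) z :=
      ((hh.differentiableAt.comp z (differentiableAt_inv hz0))).inv hne
    apply hbase.congr_of_eventuallyEq
    filter_upwards [isOpen_compl_singleton.mem_nhds hz0] with x hx
    exact Function.update_of_ne hx _ _
  have hcont : ContinuousAt H 0 := by
    rw [← continuousWithinAt_compl_self]
    have hH0 : H 0 = 0 := Function.update_self _ _ _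
    rw [ContinuousWithinAt, hH0, Metric.tendsto_nhdsWithin_nhds]
    intro ε hε
    obtain ⟨R₂, hR₂pos, hR₂⟩ := prop (ε⁻¹ + 1)
    refine ⟨R₂⁻¹, inv_pos.2 hR₂pos, fun {z} hz hdz => ?_⟩
    have hz0 : z ≠ 0 := hz
    have hzpos : 0 < ‖z‖ := norm_pos_iff.2 hz0
    rw [dist_zero_right] at hdz ⊢
    have hinv : R₂ ≤ ‖z⁻¹‖ := by
      rw [norm_inv, le_inv_comm₀ hR₂pos hzpos]; exact hdz.le
    have hbig : ε⁻¹ + 1 ≤ ‖h z⁻¹‖ := hR₂ _ hinv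
    have hpos : 0 < ‖h z⁻¹‖ := lt_of_lt_of_le (by positivity) hbig
    have hHz : H z = (h z⁻¹)⁻¹ := Function.update_of_ne hz0 _ _
    rw [hHz, norm_inv]
    have hie : 0 < ε⁻¹ := by positivity
    rw [inv_lt_iff_one_lt_mul₀ hpos]
    have : ε * (ε⁻¹ + 1) = 1 + ε := by field_simp
    nlinarith
  have han : AnalyticAt ℂ H 0 := by
    apply Complex.analyticAt_of_differentiable_on_punctured_nhds_of_continuousAt _ hcont
    filter_upwards [self_mem_nhdsWithin,
      mem_nhdsWithin_of_mem_nhds (Metric.ball_mem_nhds (0:ℂ) (ε := R₁⁻¹) (inv_pos.2 hR₁pos))] with z hz1 hz2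
    exact hdiff z hz1 (by simpa [mem_ball_zero_iff] using hz2)
  have hne_top : analyticOrderAt H 0 ≠ ⊤ := by
    intro htop
    rw [analyticOrderAt_eq_top] at htop
    have hev : ∀ᶠ z in 𝓝[≠] (0:ℂ), H z = 0 ∧ z ≠ 0 ∧ ‖z‖ < R₁⁻¹ := by
      filter_upwards [htop.filter_mono nhdsWithin_le_nhds, self_mem_nhdsWithin,
        mem_nhdsWithin_of_mem_nhds (Metric.ball_mem_nhds (0:ℂ) (ε := R₁⁻¹)
          (inv_pos.2 hR₁pos))] with z h1 h2 h3
      exact ⟨h1, h2, by simpa [mem_ball_zero_iff] using h3⟩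
    obtain ⟨z, h1, h2, h3⟩ := hev.exists
    obtain ⟨hne, hHz⟩ := hball z h2 h3
    exact inv_ne_zero hne (hHz ▸ h1)
  obtain ⟨n, hn'⟩ := WithTop.ne_top_iff_exists.1 hne_top
  have hn : analyticOrderAt H 0 = n := hn'.symm
  obtain ⟨g, hg_an, hg0, hgeq⟩ := (han.analyticOrderAt_eq_natCast (n := n)).1 hn
  -- lower bound on |g| near 0 and combine
  set c : ℝ := ‖g 0‖ / 2 with hc
  have hcpos : 0 < c := by
    have := norm_pos_iff.2 hg0
    positivity
  have hgev : ∀ᶠ z in 𝓝 (0:ℂ), c ≤ ‖g z‖ := by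
    have : ∀ᶠ z in 𝓝 (0:ℂ), g z ∈ ball (g 0) c :=
      hg_an.continuousAt.preimage_mem_nhds (ball_mem_nhds _ hcpos)
    filter_upwards [this] with z hz
    rw [mem_ball, dist_eq_norm] at hz
    have h1 := norm_sub_norm_le (g z) (g 0)
    rw [norm_sub_rev] at h1
    have : ‖g 0‖ - ‖g z‖ ≤ ‖g z - g 0‖ := by
      have := norm_sub_norm_le (g 0) (g z)
      linarith [this, (norm_sub_rev (g 0) (g z)).le]
    linarith
  have hcomb : ∀ᶠ z in 𝓝 (0:ℂ), H z = z ^ n * g z ∧ c ≤ ‖g z‖ ∧ ‖z‖ < R₁⁻¹ := by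
    filter_upwards [hgeq, hgev, Metric.ball_mem_nhds (0:ℂ) (inv_pos.2 hR₁pos)] with z h1 h2 h3
    refine ⟨by simpa using h1, h2, by simpa [mem_ball_zero_iff] using h3⟩
  obtain ⟨δ, hδpos, hδ⟩ := Metric.eventually_nhds_iff.1 hcomb
  set R₃ : ℝ := δ⁻¹ + 1 with hR₃
  have hR₃pos : 0 < R₃ := by positivity
  -- bound outside closedBall 0 R₃
  have hout : ∀ w : ℂ, R₃ ≤ ‖w‖ → ‖h w‖ ≤ c⁻¹ * (1 + ‖w‖) ^ n := by
    intro w hw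
    have hwpos : 0 < ‖w‖ := lt_of_lt_of_le hR₃pos hw
    have hw0 : w ≠ 0 := norm_pos_iff.1 hwpos
    have hdinv : ‖w‖⁻¹ < δ := by
      have h1 : δ⁻¹ < ‖w‖ := by
        rw [hR₃] at hw; linarith
      calc ‖w‖⁻¹ < (δ⁻¹)⁻¹ := by
            apply inv_strictAnti₀ (inv_pos.2 hδpos) h1
        _ = δ := inv_inv δ
    have hz := hδ (show dist (w⁻¹ : ℂ) 0 < δ by rw [dist_zero_right, norm_inv]; exact hdinv)
    obtain ⟨hHw, hgw, hwlt⟩ := hz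
    have hzi0 : (w⁻¹ : ℂ) ≠ 0 := inv_ne_zero hw0
    obtain ⟨hhne', hHw'⟩ := hball _ hzi0 hwlt
    rw [inv_inv] at hhne' hHw'
    have hval : (h w)⁻¹ = (w⁻¹) ^ n * g w⁻¹ := hHw'.symm.trans hHw
    have hnorm : ‖h w‖⁻¹ = ‖w‖⁻¹ ^ n * ‖g w⁻¹‖ := by
      rw [← norm_inv, hval, norm_mul, norm_pow, norm_inv]
    have hhpos : 0 < ‖h w‖ := norm_pos_iff.2 hhne'
    have hlow : ‖w‖⁻¹ ^ n * c ≤ ‖h w‖⁻¹ := by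
      rw [hnorm]
      exact mul_le_mul_of_nonneg_left hgw (by positivity)
    have hlowpos : 0 < ‖w‖⁻¹ ^ n * c := by positivity
    have hle : ‖h w‖ ≤ (‖w‖⁻¹ ^ n * c)⁻¹ := by
      rw [← inv_inv (‖h w‖)]
      exact inv_anti₀ hlowpos hlow
    have heq : (‖w‖⁻¹ ^ n * c)⁻¹ = c⁻¹ * ‖w‖ ^ n := by
      rw [mul_inv, inv_pow, inv_inv]; ring
    have hple : ‖w‖ ^ n ≤ (1 + ‖w‖) ^ n :=
      pow_le_pow_left₀ (norm_nonneg w) (by linarith) n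
    calc ‖h w‖ ≤ c⁻¹ * ‖w‖ ^ n := heq ▸ hle
      _ ≤ c⁻¹ * (1 + ‖w‖) ^ n :=
          mul_le_mul_of_nonneg_left hple (inv_nonneg.2 hcpos.le)
  obtain ⟨D, hD⟩ := (isCompact_closedBall (0:ℂ) R₃).exists_bound_of_continuousOn
    hh.continuous.continuousOn
  have hD0 : 0 ≤ D := le_trans (norm_nonneg (h 0)) (hD 0 (by simp [hR₃pos.le]))
  refine ⟨n, c⁻¹ + D, fun w => ?_⟩
  have hpn : (1:ℝ) ≤ (1 + ‖w‖) ^ n := one_le_pow₀ (by linarith [norm_nonneg w])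
  have hcn : (0:ℝ) ≤ c⁻¹ := inv_nonneg.2 hcpos.le
  rcases le_or_gt ‖w‖ R₃ with hw | hw
  · calc ‖h w‖ ≤ D := hD w (by simpa [mem_closedBall_zero_iff] using hw)
      _ = D * 1 := by ring
      _ ≤ (c⁻¹ + D) * (1 + ‖w‖) ^ n :=
          mul_le_mul (by linarith) hpn zero_le_one (by linarith)
  · calc ‖h w‖ ≤ c⁻¹ * (1 + ‖w‖) ^ n := hout w hw.le
      _ ≤ (c⁻¹ + D) * (1 + ‖w‖) ^ n := by nlinarith

lemma entire_inverse_affine (h k : ℂ → ℂ) (hh : Differentiable ℂ h)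
    (hk : Differentiable ℂ k) (hkh : ∀ w, k (h w) = w) (hhk : ∀ w, h (k w) = w) :
    ∀ w : ℂ, h w = (h 1 - h 0) * w + h 0 := by
  obtain ⟨n, C, hC⟩ := entire_left_inverse_growth h k hh hk hkh
  obtain ⟨m, C', hC'⟩ := entire_left_inverse_growth k h hk hh hhk
  obtain ⟨p, hp⟩ := entire_poly_growth n h hh ⟨C, hC⟩
  obtain ⟨q, hq⟩ := entire_poly_growth m k hk ⟨C', hC'⟩
  have hcomp : p.comp q = Polynomial.X := by
    apply Polynomial.funext
    intro r
    rw [eval_comp, ← hq, ← hp, hhk, eval_X]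
  have hdeg : p.natDegree * q.natDegree = 1 := by
    rw [← natDegree_comp, hcomp, natDegree_X]
  have hp1 : p.natDegree = 1 := Nat.eq_one_of_mul_eq_one_right hdeg
  have hdle : p.degree ≤ 1 := by
    refine le_trans degree_le_natDegree ?_
    rw [hp1]; exact le_refl _
  have hform := eq_X_add_C_of_degree_le_one hdle
  have heval : ∀ w : ℂ, p.eval w = p.coeff 1 * w + p.coeff 0 := by
    intro w
    conv_lhs => rw [hform]
    simp
  have h0 : h 0 = p.coeff 0 := by rw [hp 0, heval 0]; ring
  have h1 : h 1 - h 0 = p.coeff 1 := by rw [hp 1, hp 0, heval 1, heval 0]; ring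
  intro w
  rw [hp w, heval w]
  rw [← h1, ← h0]

/-- every holomorphic automorphism of Δ × ℂ has the form
(z, w) ↦ (φ(z), f(z)·w + g(z)) with φ ∈ Aut(Δ), f nowhere zero holomorphic,
g holomorphic. -/
theorem stmt9 (Φ Ψ : ℂ × ℂ → ℂ × ℂ)
    (hΦd : DifferentiableOn ℂ Φ (ball (0 : ℂ) 1 ×ˢ (univ : Set ℂ)))
    (hΨd : DifferentiableOn ℂ Ψ (ball (0 : ℂ) 1 ×ˢ (univ : Set ℂ)))
    (hΦmaps : MapsTo Φ (ball (0 : ℂ) 1 ×ˢ (univ : Set ℂ)) (ball (0 : ℂ) 1 ×ˢ (univ : Set ℂ)))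
    (hΨmaps : MapsTo Ψ (ball (0 : ℂ) 1 ×ˢ (univ : Set ℂ)) (ball (0 : ℂ) 1 ×ˢ (univ : Set ℂ)))
    (hinv : ∀ p ∈ ball (0 : ℂ) 1 ×ˢ (univ : Set ℂ), Ψ (Φ p) = p ∧ Φ (Ψ p) = p) :
    ∃ φ f g : ℂ → ℂ,
      DifferentiableOn ℂ φ (ball (0 : ℂ) 1) ∧
      BijOn φ (ball (0 : ℂ) 1) (ball (0 : ℂ) 1) ∧
      (∃ φ' : ℂ → ℂ, DifferentiableOn ℂ φ' (ball (0 : ℂ) 1) ∧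
        ∀ z ∈ ball (0 : ℂ) 1, φ' (φ z) = z ∧ φ (φ' z) = z) ∧
      DifferentiableOn ℂ f (ball (0 : ℂ) 1) ∧ (∀ z ∈ ball (0 : ℂ) 1, f z ≠ 0) ∧
      DifferentiableOn ℂ g (ball (0 : ℂ) 1) ∧
      ∀ z ∈ ball (0 : ℂ) 1, ∀ w : ℂ, Φ (z, w) = (φ z, f z * w + g z) := by
  set B : Set ℂ := ball (0 : ℂ) 1 with hBdef
  set S : Set (ℂ × ℂ) := B ×ˢ (univ : Set ℂ) with hSdef
  have hSo : IsOpen S := isOpen_ball.prod isOpen_univ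
  have hmem : ∀ z ∈ B, ∀ w : ℂ, (z, w) ∈ S := fun z hz w => ⟨hz, trivial⟩
  have hΦat : ∀ p ∈ S, DifferentiableAt ℂ Φ p :=
    fun p hp => hΦd.differentiableAt (hSo.mem_nhds hp)
  have hΨat : ∀ p ∈ S, DifferentiableAt ℂ Ψ p :=
    fun p hp => hΨd.differentiableAt (hSo.mem_nhds hp)
  -- vertical slices are entire
  have hslice : ∀ (F : ℂ × ℂ → ℂ × ℂ), (∀ p ∈ S, DifferentiableAt ℂ F p) →
      ∀ z ∈ B, Differentiable ℂ (fun w => F (z, w)) := by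
    intro F hF z hz w
    exact (hF (z, w) (hmem z hz w)).comp w
      ((differentiableAt_const z).prodMk differentiableAt_id)
  -- first coordinates are constant in w (Liouville)
  have hfst : ∀ (F : ℂ × ℂ → ℂ × ℂ), (∀ p ∈ S, DifferentiableAt ℂ F p) →
      MapsTo F S S → ∀ z ∈ B, ∀ w : ℂ, (F (z, w)).1 = (F (z, 0)).1 := by
    intro F hFd hFm z hz w
    have hd : Differentiable ℂ (fun w => (F (z, w)).1) :=
      fun w => (hslice F hFd z hz w).fst
    apply hd.apply_eq_apply_of_bounded
    apply (isBounded_ball (x := (0:ℂ)) (r := 1)).subset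
    rintro - ⟨w, rfl⟩
    exact (hFm (hmem z hz w)).1
  set φ : ℂ → ℂ := fun z => (Φ (z, 0)).1 with hφdef
  set ψ : ℂ → ℂ := fun z => (Ψ (z, 0)).1 with hψdef
  set g : ℂ → ℂ := fun z => (Φ (z, 0)).2 with hgdef
  set f : ℂ → ℂ := fun z => (Φ (z, 1)).2 - (Φ (z, 0)).2 with hfdef
  have hΦeq : ∀ z ∈ B, ∀ w : ℂ, Φ (z, w) = (φ z, (Φ (z, w)).2) := fun z hz w =>
    Prod.ext (hfst Φ hΦat hΦmaps z hz w) rfl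
  have hΨeq : ∀ z ∈ B, ∀ w : ℂ, Ψ (z, w) = (ψ z, (Ψ (z, w)).2) := fun z hz w =>
    Prod.ext (hfst Ψ hΨat hΨmaps z hz w) rfl
  have hφmem : ∀ z ∈ B, φ z ∈ B := fun z hz => (hΦmaps (hmem z hz 0)).1
  have hψmem : ∀ z ∈ B, ψ z ∈ B := fun z hz => (hΨmaps (hmem z hz 0)).1
  have hψφ : ∀ z ∈ B, ψ (φ z) = z := by
    intro z hz
    have h1 : Ψ (Φ (z, 0)) = (z, 0) := (hinv _ (hmem z hz 0)).1
    rw [hΦeq z hz 0] at h1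
    have h4 := hΨeq (φ z) (hφmem z hz) ((Φ (z, 0)).2)
    rw [h4] at h1
    exact congrArg Prod.fst h1
  have hφψ : ∀ z ∈ B, φ (ψ z) = z := by
    intro z hz
    have h1 : Φ (Ψ (z, 0)) = (z, 0) := (hinv _ (hmem z hz 0)).2
    rw [hΨeq z hz 0] at h1
    have h4 := hΦeq (ψ z) (hψmem z hz) ((Ψ (z, 0)).2)
    rw [h4] at h1
    exact congrArg Prod.fst h1
  -- horizontal differentiability
  have hhor : ∀ (F : ℂ × ℂ → ℂ × ℂ), (∀ p ∈ S, DifferentiableAt ℂ F p) →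
      ∀ w : ℂ, DifferentiableOn ℂ (fun z => F (z, w)) B := by
    intro F hF w z hz
    exact ((hF (z, w) (hmem z hz w)).comp z
      (differentiableAt_id.prodMk (differentiableAt_const w))).differentiableWithinAt
  have hφdiff : DifferentiableOn ℂ φ B := fun z hz =>
    ((hhor Φ hΦat 0 z hz).fst)
  have hψdiff : DifferentiableOn ℂ ψ B := fun z hz =>
    ((hhor Ψ hΨat 0 z hz).fst)
  have hgdiff : DifferentiableOn ℂ g B := fun z hz =>
    ((hhor Φ hΦat 0 z hz).snd)
  have hfdiff : DifferentiableOn ℂ f B := fun z hz =>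
    ((hhor Φ hΦat 1 z hz).snd).sub ((hhor Φ hΦat 0 z hz).snd)
  -- the affine structure on each slice
  have hmain : ∀ z ∈ B, (∀ w : ℂ, (Φ (z, w)).2 = f z * w + g z) ∧ f z ≠ 0 := by
    intro z hz
    set hfun : ℂ → ℂ := fun w => (Φ (z, w)).2 with hhdef
    set kfun : ℂ → ℂ := fun u => (Ψ (φ z, u)).2 with hkdef
    have hhd : Differentiable ℂ hfun := fun w => (hslice Φ hΦat z hz w).snd
    have hkd : Differentiable ℂ kfun :=
      fun u => (hslice Ψ hΨat (φ z) (hφmem z hz) u).snd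
    have hkh : ∀ w, kfun (hfun w) = w := by
      intro w
      have e1 : Ψ (Φ (z, w)) = (z, w) := (hinv _ (hmem z hz w)).1
      rw [hΦeq z hz w] at e1
      exact congrArg Prod.snd e1
    have hhk : ∀ u, hfun (kfun u) = u := by
      intro u
      have e1 : Φ (Ψ (φ z, u)) = (φ z, u) :=
        (hinv _ (hmem (φ z) (hφmem z hz) u)).2
      have e2 : Ψ (φ z, u) = (z, kfun u) := by
        rw [hΨeq (φ z) (hφmem z hz) u, hψφ z hz]
      rw [e2] at e1
      exact congrArg Prod.snd e1
    have haff := entire_inverse_affine hfun kfun hhd hkd hkh hhk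
    have hfz : f z = hfun 1 - hfun 0 := rfl
    have hgz : g z = hfun 0 := rfl
    constructor
    · intro w
      have := haff w
      rw [hfz, hgz]
      exact this
    · rw [hfz]
      intro h0
      have he : hfun 1 = hfun 0 := by
        have := sub_eq_zero.1 h0
        exact this
      have : (1 : ℂ) = 0 := by
        calc (1 : ℂ) = kfun (hfun 1) := (hkh 1).symm
          _ = kfun (hfun 0) := by rw [he]
          _ = 0 := hkh 0
      exact one_ne_zero this
  refine ⟨φ, f, g, hφdiff, ?_, ⟨ψ, hψdiff, fun z hz => ⟨hψφ z hz, hφψ z hz⟩⟩,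
    hfdiff, fun z hz => (hmain z hz).2, hgdiff, ?_⟩
  · exact InvOn.bijOn ⟨hψφ, fun z hz => hφψ z hz⟩ hφmem hψmem
  · intro z hz w
    rw [hΦeq z hz w, (hmain z hz).1 w]
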